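/- Let S = {(x,y) ∈ ℝ² : ⌊y⌋ even} and v = (0,1). Then the set T = S Δ (S + (2/3)v) satisfies T ⊕₂ {0, (1/3)v, (2/3)v} = ∅; that is, every point of the plane is covered an even number of times by the three translates T, T + (0,1/3), T + (0,2/3). -/

import Mathlib

open scoped Classical symmDiff

/-- The Minkowski sum modulo 2 of a set `X ⊆ ℝ²` with a finite set `K`. -/
noncomputable def oddMink (X : Set (ℝ × ℝ)) (K : Finset (ℝ × ℝ)) : Set (ℝ × ℝ) :=
  {a | Odd ((K.filter (fun z => a - z ∈ X)).card)}

/-- The standard horizontal stripe pattern. -/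
def stripeS : Set (ℝ × ℝ) := {p | Even ⌊p.2⌋}

theorem stripe_two_thirds_cancel :
    oddMink (stripeS ∆ ((fun p => p + ((0 : ℝ), (2 / 3 : ℝ))) '' stripeS))
      ({((0 : ℝ), (0 : ℝ)), (0, 1 / 3), (0, 2 / 3)} : Finset (ℝ × ℝ)) = ∅ := by
  ext a
  obtain ⟨x, y⟩ := a
  simp only [oddMink, Set.mem_setOf_eq, Set.mem_empty_iff_false, iff_false]
  set T : Set (ℝ × ℝ) := stripeS ∆ ((fun p => p + ((0 : ℝ), (2 / 3 : ℝ))) '' stripeS) with hT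
  have himg : ∀ q : ℝ × ℝ, (q ∈ (fun p => p + ((0 : ℝ), (2 / 3 : ℝ))) '' stripeS) ↔
      Even ⌊q.2 - 2/3⌋ := by
    intro q
    constructor
    · rintro ⟨p, hp, rfl⟩
      simpa [stripeS] using hp
    · intro h
      exact ⟨q - (0, 2/3), by simpa [stripeS] using h, by simp⟩
  have hmem : ∀ t : ℝ, ((x, y) - ((0 : ℝ), t) ∈ T) ↔
      Xor' (Even ⌊y - t⌋) (Even ⌊y - t - 2/3⌋) := by
    intro t
    rw [hT, Set.mem_symmDiff]
    have h1 : ((x, y) - ((0 : ℝ), t) ∈ stripeS) ↔ Even ⌊y - t⌋ := by simp [stripeS]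
    have h2 := himg ((x, y) - ((0 : ℝ), t))
    simp only [Prod.snd_sub] at h2
    rw [h1, h2]
    unfold Xor' Xor
    tauto
  -- key floor shift relations
  have key : ∀ s : ℝ, Even ⌊y - (s + 1)⌋ ↔ ¬ Even ⌊y - s⌋ := by
    intro s
    have : y - (s + 1) = (y - s) + (-1 : ℤ) := by push_cast; ring
    rw [this, Int.floor_add_intCast]
    simp [Int.even_add]
  set A := Even ⌊y - (0:ℝ)⌋ with hA
  set B := Even ⌊y - 1/3⌋ with hB
  set C := Even ⌊y - 2/3⌋ with hC
  have e0 : ((x, y) - ((0 : ℝ), (0:ℝ)) ∈ T) ↔ Xor' A C := by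
    rw [hmem 0]
    have : y - (0:ℝ) - 2/3 = y - 2/3 := by ring
    rw [this]
  have e1 : ((x, y) - ((0 : ℝ), (1/3:ℝ)) ∈ T) ↔ Xor' B (¬ A) := by
    rw [hmem (1/3)]
    have h1 : y - 1/3 - 2/3 = y - (0 + 1) := by ring
    rw [h1, key 0]
  have e2 : ((x, y) - ((0 : ℝ), (2/3:ℝ)) ∈ T) ↔ Xor' C (¬ B) := by
    rw [hmem (2/3)]
    have h1 : y - 2/3 - 2/3 = y - (1/3 + 1) := by ring
    rw [h1, key (1/3)]
  have d01 : ((0:ℝ), (0:ℝ)) ≠ ((0:ℝ), (1/3:ℝ)) := by norm_num [Prod.ext_iff]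
  have d02 : ((0:ℝ), (0:ℝ)) ≠ ((0:ℝ), (2/3:ℝ)) := by norm_num [Prod.ext_iff]
  have d12 : ((0:ℝ), (1/3:ℝ)) ≠ ((0:ℝ), (2/3:ℝ)) := by norm_num [Prod.ext_iff]
  rw [Finset.card_filter,
    Finset.sum_insert (by norm_num [Prod.ext_iff]),
    Finset.sum_insert (by norm_num [Prod.ext_iff]), Finset.sum_singleton]
  simp only [e0, e1, e2]
  by_cases hA' : A <;> by_cases hB' : B <;> by_cases hC' : C <;>
    simp [hA', hB', hC', Xor']
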